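/- For every rectifiable closed curve β embedded in ℝ³, 4·dist(β) ≥ conlength(β), where dist(β) = sup_{x,y∈β} d_β(x,y)/|x−y| is the distortion and conlength(β) = sup_{r>0, x∈ℝ³} length(B(x,r) ∩ β)/r is the conformal length. -/
import Mathlib


/-!
STATEMENT 9. `4·dist(β) ≥ conlength(β)` (Gromov–Guth, Lemma 4.1).

The rectifiable closed curve `β ⊂ ℝ³` of length `L` is parametrized by
arclength by an `L`-periodic, unit-speed (hence `1`-Lipschitz) map
`γ : ℝ → ℝ³`, injective on a period.  For parameters `s, t ∈ [0, L)` the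
intrinsic distance along the curve is `d_β(γ s, γ t) = min |s−t| (L − |s−t|)`,
and the length of `β` inside a set `B` is the Lebesgue measure of
`{t ∈ [0, L) | γ t ∈ B}`.

`D` is any upper bound for the distortion ratios `d_β(x,y)/|x−y|`; the
conclusion states `conlength(β) ≤ 4·D`, i.e. for every Euclidean ball
`B(x,r)` the length of `β ∩ B(x,r)` is at most `4·D·r`.
-/
theorem stmt9
    (L D : ℝ) (hL : 0 < L)
    (γ : ℝ → EuclideanSpace ℝ (Fin 3))
    (hper : ∀ t, γ (t + L) = γ t)                       -- closed curve of length L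
    (hlip : LipschitzWith 1 γ)                          -- unit-speed (arclength) parametrization
    (hinj : Set.InjOn γ (Set.Ico 0 L))                  -- embedded
    -- D bounds the distortion:  d_β(γ s, γ t) ≤ D · |γ s − γ t|
    (hD : ∀ s ∈ Set.Ico (0 : ℝ) L, ∀ t ∈ Set.Ico (0 : ℝ) L,
      min |s - t| (L - |s - t|) ≤ D * dist (γ s) (γ t)) :
    -- conlength(β) ≤ 4 D :
    ∀ (x : EuclideanSpace ℝ (Fin 3)) (r : ℝ), 0 < r →
      (MeasureTheory.volume {t ∈ Set.Ico (0 : ℝ) L | γ t ∈ Metric.ball x r}).toReal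
        ≤ 4 * D * r := by
  intro x r hr
  -- D is nonnegative
  have hD0 : 0 ≤ D := by
    by_contra h
    push_neg at h
    have h1 := hD 0 ⟨le_refl 0, hL⟩ (L/2) ⟨by linarith, by linarith⟩
    have habs : |(0:ℝ) - L/2| = L/2 := by
      rw [zero_sub, abs_neg, abs_of_nonneg (by linarith)]
    rw [habs] at h1
    have hmin : min (L/2) (L - L/2) = L/2 := by
      rw [show L - L/2 = L/2 by ring, min_self]
    rw [hmin] at h1
    nlinarith [dist_nonneg (x := γ 0) (y := γ (L/2)),
      mul_nonpos_of_nonpos_of_nonneg h.le (dist_nonneg (x := γ 0) (y := γ (L/2)))]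
  set S : Set ℝ := {t ∈ Set.Ico (0 : ℝ) L | γ t ∈ Metric.ball x r} with hSdef
  have h4Dr : 0 ≤ 4 * D * r := by positivity
  rcases Set.eq_empty_or_nonempty S with hS | hS
  · rw [hS]
    simpa using h4Dr
  obtain ⟨a, haI, haB⟩ := hS
  set m : ℝ := 2 * D * r with hm
  have hm0 : 0 ≤ m := by positivity
  have key : ∀ t ∈ S, min |t - a| (L - |t - a|) ≤ m := by
    intro t ⟨htI, htB⟩
    have hdist : dist (γ t) (γ a) ≤ 2 * r := by
      have := dist_triangle_right (γ t) (γ a) x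
      rw [Metric.mem_ball] at htB haB
      linarith
    calc min |t - a| (L - |t - a|) ≤ D * dist (γ t) (γ a) := hD t htI a haI
      _ ≤ D * (2 * r) := mul_le_mul_of_nonneg_left hdist hD0
      _ = m := by rw [hm]; ring
  -- cover S by three intervals
  have hsub : S ⊆ (Set.Icc (max (a - m) 0) (min (a + m) L) ∪
      Set.Icc (a + L - m) L) ∪ Set.Icc 0 (a - L + m) := by
    rintro t ⟨htI, htB⟩
    have hk := key t ⟨htI, htB⟩
    rcases le_or_gt |t - a| m with hc | hc
    · rcases abs_le.mp hc with ⟨hc1, hc2⟩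
      exact Or.inl (Or.inl ⟨max_le (by linarith) htI.1, le_min (by linarith) htI.2.le⟩)
    · have hc2 : L - |t - a| ≤ m := by
        rcases min_le_iff.mp hk with h | h
        · linarith
        · exact h
      rcases abs_cases (t - a) with ⟨he, _⟩ | ⟨he, _⟩
      · rw [he] at hc2
        exact Or.inl (Or.inr ⟨by linarith, htI.2.le⟩)
      · rw [he] at hc2
        exact Or.inr ⟨htI.1, by linarith⟩
  have hx1 : 0 ≤ min (a + m) L - max (a - m) 0 := by
    have := haI.1; have := haI.2
    have h1 : max (a - m) 0 ≤ min (a + m) L :=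
      max_le (le_min (by linarith) (by linarith)) (le_min (by linarith) hL.le)
    linarith
  have hreal : (min (a + m) L - max (a - m) 0) + max (L - (a + L - m)) 0
      + max (a - L + m - 0) 0 ≤ 4 * D * r := by
    have ha1 := haI.1; have ha2 := haI.2
    have : (min (a + m) L - max (a - m) 0) + max (L - (a + L - m)) 0
        + max (a - L + m - 0) 0 ≤ 2 * m := by
      rcases le_total (a - m) 0 with h2 | h2 <;> rcases le_total (a + m) L with h1 | h1 <;>
        simp only [min_def, max_def] <;> split_ifs <;> linarith
    linarith [this, show (2:ℝ) * m = 4 * D * r by rw [hm]; ring]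
  have hmeas : MeasureTheory.volume S ≤ ENNReal.ofReal (4 * D * r) := by
    calc MeasureTheory.volume S
        ≤ MeasureTheory.volume ((Set.Icc (max (a - m) 0) (min (a + m) L) ∪
            Set.Icc (a + L - m) L) ∪ Set.Icc 0 (a - L + m)) :=
          MeasureTheory.measure_mono hsub
      _ ≤ MeasureTheory.volume (Set.Icc (max (a - m) 0) (min (a + m) L) ∪
            Set.Icc (a + L - m) L) + MeasureTheory.volume (Set.Icc 0 (a - L + m)) :=
          MeasureTheory.measure_union_le _ _
      _ ≤ (MeasureTheory.volume (Set.Icc (max (a - m) 0) (min (a + m) L)) +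
            MeasureTheory.volume (Set.Icc (a + L - m) L)) +
            MeasureTheory.volume (Set.Icc 0 (a - L + m)) := by
          gcongr
          exact MeasureTheory.measure_union_le _ _
      _ = (ENNReal.ofReal (min (a + m) L - max (a - m) 0) +
            ENNReal.ofReal (L - (a + L - m))) + ENNReal.ofReal (a - L + m - 0) := by
          rw [Real.volume_Icc, Real.volume_Icc, Real.volume_Icc]
      _ ≤ (ENNReal.ofReal (min (a + m) L - max (a - m) 0) +
            ENNReal.ofReal (max (L - (a + L - m)) 0)) +
            ENNReal.ofReal (max (a - L + m - 0) 0) := by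
          gcongr <;> exact le_max_left _ _
      _ = ENNReal.ofReal ((min (a + m) L - max (a - m) 0) + max (L - (a + L - m)) 0
            + max (a - L + m - 0) 0) := by
          rw [← ENNReal.ofReal_add hx1 (le_max_right _ _),
            ← ENNReal.ofReal_add (by positivity) (le_max_right _ _)]
      _ ≤ ENNReal.ofReal (4 * D * r) := ENNReal.ofReal_le_ofReal hreal
  exact ENNReal.toReal_le_of_le_ofReal h4Dr hmeas
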